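/- If {u_k} is a sequence in 𝒟 with sup_k ‖u_k‖ < +∞, then there exist a subsequence {u_{k_j}} and a function u ∈ 𝒟 such that for every real κ with p ≤ κ < +∞ one has ∑_{n∈ℤ} |u_{k_j}(n) − u(n)|^κ → 0 as j → +∞, and also sup_{n∈ℤ} |u_{k_j}(n) − u(n)| → 0 as j → +∞; that is, 𝒟 is compactly embedded in ℓ^κ(ℤ,ℝ) for every p ≤ κ ≤ +∞. -/

import Mathlib

noncomputable section

open Real Filter Set

namespace DPLap

/-- Forward difference operator. -/
def dlt (u : ℤ → ℝ) (n : ℤ) : ℝ := u (n + 1) - u n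

/-- Positive part `u⁺`. -/
def pos (u : ℤ → ℝ) : ℤ → ℝ := fun n => max (u n) 0

/-- Negative part `u⁻`. -/
def neg (u : ℤ → ℝ) : ℤ → ℝ := fun n => min (u n) 0

/-- Summand of the `E`-norm. -/
def nsum (a b : ℤ → ℝ) (p : ℕ) (u : ℤ → ℝ) (n : ℤ) : ℝ :=
  a n * |dlt u n| ^ p + b n * |u n| ^ p

/-- Membership in the space `E`. -/
def memE (a b : ℤ → ℝ) (p : ℕ) (u : ℤ → ℝ) : Prop :=
  Summable (nsum a b p u)

/-- The norm `‖u‖ = (∑ [a|Δu|^p + b|u|^p])^(1/p)`. -/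
def dnorm (a b : ℤ → ℝ) (p : ℕ) (u : ℤ → ℝ) : ℝ :=
  (∑' n : ℤ, nsum a b p u n) ^ ((p : ℝ)⁻¹)

/-- Summand `c(n)|u(n)|^q ln(|u(n)|^r)` of the logarithmic term (with the
convention `0^q ln 0 = 0`, automatic from `Real.rpow` and `Real.log`). -/
def logSummand (c : ℤ → ℝ) (q r : ℝ) (u : ℤ → ℝ) (n : ℤ) : ℝ :=
  c n * |u n| ^ q * Real.log (|u n| ^ r)

/-- Membership in `𝒟`. -/
def memD (a b c : ℤ → ℝ) (p : ℕ) (q r : ℝ) (u : ℤ → ℝ) : Prop :=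
  memE a b p u ∧ Summable (logSummand c q r u)

/-- The energy functional `I`. -/
def En (a b c : ℤ → ℝ) (p : ℕ) (q r : ℝ) (u : ℤ → ℝ) : ℝ :=
  (1 / (p : ℝ)) * dnorm a b p u ^ p
    + (r / q ^ 2) * ∑' n : ℤ, c n * |u n| ^ q
    - (1 / q) * ∑' n : ℤ, logSummand c q r u n

/-- The pairing `⟨I'(u), v⟩`. -/
def pr (a b c : ℤ → ℝ) (p : ℕ) (q r : ℝ) (u v : ℤ → ℝ) : ℝ :=
  (∑' n : ℤ, (a n * |dlt u n| ^ (p - 2) * dlt u n * dlt v n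
      + b n * |u n| ^ (p - 2) * u n * v n))
    - ∑' n : ℤ, c n * |u n| ^ (q - 2) * u n * v n * Real.log (|u n| ^ r)

/-- The Nehari set `𝒩`. -/
def Nset (a b c : ℤ → ℝ) (p : ℕ) (q r : ℝ) : Set (ℤ → ℝ) :=
  {u | memD a b c p q r u ∧ u ≠ 0 ∧ pr a b c p q r u u = 0}

/-- The sign-changing Nehari set `ℳ`. -/
def Mset (a b c : ℤ → ℝ) (p : ℕ) (q r : ℝ) : Set (ℤ → ℝ) :=
  {u | memD a b c p q r u ∧ pos u ≠ 0 ∧ neg u ≠ 0 ∧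
      pr a b c p q r u (pos u) = 0 ∧ pr a b c p q r u (neg u) = 0}

/-- `m* = inf_ℳ I`. -/
def mStar (a b c : ℤ → ℝ) (p : ℕ) (q r : ℝ) : ℝ :=
  sInf (En a b c p q r '' Mset a b c p q r)

/-- `c* = inf_𝒩 I`. -/
def cStar (a b c : ℤ → ℝ) (p : ℕ) (q r : ℝ) : ℝ :=
  sInf (En a b c p q r '' Nset a b c p q r)


private lemma tri_abs (x y : ℝ) : |x - y| ≤ |x| + |y| := by
  calc |x - y| = |x + -y| := by rw [sub_eq_add_neg]
    _ ≤ |x| + |-y| := abs_add_le _ _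
    _ = |x| + |y| := by rw [abs_neg]

private lemma rpow_le_pow_mul {x Mx : ℝ} (hx : 0 ≤ x) (hxM : x ≤ Mx) {p : ℕ} (hp : 1 ≤ p)
    {κ : ℝ} (hκ : (p : ℝ) ≤ κ) : x ^ κ ≤ x ^ p * Mx ^ (κ - (p : ℝ)) := by
  have hp' : (1 : ℝ) ≤ (p : ℝ) := by exact_mod_cast hp
  have hne : (p : ℝ) + (κ - (p : ℝ)) ≠ 0 := by
    rw [show (p : ℝ) + (κ - (p : ℝ)) = κ by ring]; linarith
  calc x ^ κ = x ^ ((p : ℝ) + (κ - (p : ℝ))) := by rw [show (p:ℝ) + (κ - (p:ℝ)) = κ by ring]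
    _ = x ^ (p : ℝ) * x ^ (κ - (p : ℝ)) := Real.rpow_add' hx hne
    _ = x ^ p * x ^ (κ - (p : ℝ)) := by rw [Real.rpow_natCast]
    _ ≤ x ^ p * Mx ^ (κ - (p : ℝ)) := by
        exact mul_le_mul_of_nonneg_left (Real.rpow_le_rpow hx hxM (by linarith))
          (pow_nonneg hx p)

private lemma pow_log_bound {q r M t : ℝ} (hq : 2 ≤ q) (hr : 0 ≤ r) (ht : 0 ≤ t) (htM : t ≤ M) :
    |t ^ q * Real.log (t ^ r)| ≤ r * max 1 ((M + 1) ^ (q + 1)) := by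
  have hmax0 : (0:ℝ) ≤ max 1 ((M + 1) ^ (q + 1)) := le_trans zero_le_one (le_max_left _ _)
  rcases eq_or_lt_of_le ht with h0 | htpos
  · rw [← h0, Real.zero_rpow (by linarith : q ≠ 0)]
    simpa using mul_nonneg hr hmax0
  · rw [Real.log_rpow htpos]
    have h1 : |t ^ q * (r * Real.log t)| = r * (t ^ q * |Real.log t|) := by
      rw [abs_mul, abs_mul, abs_of_nonneg (Real.rpow_nonneg ht q), abs_of_nonneg hr]; ring
    rw [h1]
    refine mul_le_mul_of_nonneg_left ?_ hr
    rcases le_total t 1 with ht1 | ht1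
    · refine le_trans ?_ (le_max_left _ _)
      have hlog : |Real.log t| ≤ t⁻¹ := by
        rw [abs_of_nonpos (Real.log_nonpos ht ht1), ← Real.log_inv]
        have := Real.log_le_sub_one_of_pos (inv_pos.2 htpos)
        have hti : (1:ℝ) ≤ t⁻¹ := (one_le_inv₀ htpos).2 ht1
        linarith
      calc t ^ q * |Real.log t| ≤ t ^ q * t⁻¹ :=
            mul_le_mul_of_nonneg_left hlog (Real.rpow_nonneg ht q)
        _ = t ^ (q - 1) := by
            rw [Real.rpow_sub htpos, Real.rpow_one, div_eq_mul_inv]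
        _ ≤ 1 := Real.rpow_le_one ht ht1 (by linarith)
    · refine le_trans ?_ (le_max_right _ _)
      have hM1 : t ≤ M + 1 := by linarith
      have hlog : |Real.log t| ≤ M + 1 := by
        rw [abs_of_nonneg (Real.log_nonneg ht1)]
        have := Real.log_le_sub_one_of_pos htpos
        linarith
      calc t ^ q * |Real.log t| ≤ (M+1) ^ q * (M+1) := by
            refine mul_le_mul (Real.rpow_le_rpow ht hM1 (by linarith)) hlog (abs_nonneg _)
              (Real.rpow_nonneg (by linarith) q)
        _ = (M+1) ^ (q+1) := by
            rw [Real.rpow_add (by linarith : (0:ℝ) < M + 1), Real.rpow_one]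

theorem stmt3 (p : ℕ) (hp2 : 2 ≤ p) (hpe : Even p)
    (q r : ℝ) (hpq : (p : ℝ) < q) (hr : 1 ≤ r)
    (a b c : ℤ → ℝ)
    (ha : ∀ n, 0 < a n) (hb : ∀ n, 0 < b n) (hc : ∀ n, 0 < c n)
    (b0 : ℝ) (hb0 : 0 < b0) (hbb : ∀ n, b0 ≤ b n)
    (hbinf : Tendsto b cofinite atTop)
    (c0 : ℝ) (hc0 : 0 < c0) (hcc : ∀ n, c n ≤ c0)
    (hcsum : Summable c)
    (u : ℕ → ℤ → ℝ) (hu : ∀ k, memD a b c p q r (u k))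
    (hbdd : ∃ C : ℝ, ∀ k, dnorm a b p (u k) ≤ C) :
    ∃ φ : ℕ → ℕ, StrictMono φ ∧
      ∃ v : ℤ → ℝ, memD a b c p q r v ∧
        (∀ κ : ℝ, (p : ℝ) ≤ κ →
          Tendsto (fun j => ∑' n : ℤ, |u (φ j) n - v n| ^ κ) atTop (nhds 0)) ∧
        (∀ ε : ℝ, 0 < ε → ∃ N : ℕ, ∀ j ≥ N, ∀ n : ℤ, |u (φ j) n - v n| ≤ ε) := by
  classical
  obtain ⟨C, hC⟩ := hbdd
  have hp0 : 0 < p := lt_of_lt_of_le two_pos hp2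
  have hp0' : (0:ℝ) < (p:ℝ) := by exact_mod_cast hp0
  have hns_nonneg : ∀ (w : ℤ → ℝ) (n : ℤ), 0 ≤ nsum a b p w n := by
    intro w n
    exact add_nonneg (mul_nonneg (ha n).le (pow_nonneg (abs_nonneg _) p))
      (mul_nonneg (hb n).le (pow_nonneg (abs_nonneg _) p))
  have hsum : ∀ k, Summable (nsum a b p (u k)) := fun k => (hu k).1
  have hC0 : 0 ≤ C := le_trans (Real.rpow_nonneg (tsum_nonneg (hns_nonneg (u 0))) _) (hC 0)
  have hCp : ∀ k, ∑' n, nsum a b p (u k) n ≤ C ^ p := by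
    intro k
    have h0 : 0 ≤ ∑' n, nsum a b p (u k) n := tsum_nonneg (hns_nonneg (u k))
    have h1 : ((∑' n, nsum a b p (u k) n) ^ ((p:ℝ)⁻¹)) ^ p ≤ C ^ p :=
      pow_le_pow_left₀ (Real.rpow_nonneg h0 _) (hC k) p
    rwa [Real.rpow_inv_natCast_pow h0 hp0.ne'] at h1
  have hbpart : ∀ (w : ℤ → ℝ) (n : ℤ), b n * |w n| ^ p ≤ nsum a b p w n := by
    intro w n
    exact le_add_of_nonneg_left (mul_nonneg (ha n).le (pow_nonneg (abs_nonneg _) p))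
  have hbu : ∀ k n, b n * |u k n| ^ p ≤ C ^ p := by
    intro k n
    exact le_trans (le_trans (hbpart (u k) n)
      (Summable.le_tsum (hsum k) n fun m _ => hns_nonneg _ m)) (hCp k)
  set M : ℝ := (C ^ p / b0) ^ ((p:ℝ)⁻¹) with hMdef
  have hD0 : 0 ≤ C ^ p / b0 := div_nonneg (pow_nonneg hC0 p) hb0.le
  have hM0 : 0 ≤ M := Real.rpow_nonneg hD0 _
  have habs : ∀ (w : ℤ → ℝ), (∀ n, b n * |w n| ^ p ≤ C ^ p) → ∀ n, |w n| ≤ M := by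
    intro w hw n
    have h1 : |w n| ^ p ≤ C ^ p / b0 := by
      rw [le_div_iff₀ hb0]
      calc |w n| ^ p * b0 = b0 * |w n| ^ p := mul_comm _ _
        _ ≤ b n * |w n| ^ p :=
          mul_le_mul_of_nonneg_right (hbb n) (pow_nonneg (abs_nonneg _) p)
        _ ≤ C ^ p := hw n
    refine le_of_pow_le_pow_left₀ hp0.ne' hM0 ?_
    rwa [hMdef, Real.rpow_inv_natCast_pow hD0 hp0.ne']
  have hUM : ∀ k n, |u k n| ≤ M := fun k => habs _ (hbu k)
  -- compactness / subsequence
  have hcomp : IsCompact (Set.pi (Set.univ : Set ℤ) fun _ => Icc (-M) M) :=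
    isCompact_univ_pi fun _ => isCompact_Icc
  have hmem : ∀ k, u k ∈ Set.pi Set.univ fun _ : ℤ => Icc (-M) M := by
    intro k n _
    exact abs_le.1 (hUM k n)
  obtain ⟨v, hvs, φ, hφ, hconv⟩ := hcomp.tendsto_subseq hmem
  have hpt : ∀ n, Tendsto (fun j => u (φ j) n) atTop (nhds (v n)) := fun n =>
    tendsto_pi_nhds.1 hconv n
  have hvM : ∀ n, |v n| ≤ M := fun n => abs_le.2 (hvs n (mem_univ n))
  have hbv : ∀ n, b n * |v n| ^ p ≤ C ^ p := by
    intro n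
    exact le_of_tendsto (tendsto_const_nhds.mul (((hpt n).abs).pow p))
      (Eventually.of_forall fun j => hbu (φ j) n)
  -- membership of v in E
  have hnsv_fin : ∀ F : Finset ℤ, ∑ n ∈ F, nsum a b p v n ≤ C ^ p := by
    intro F
    have hlim : Tendsto (fun j => ∑ n ∈ F, nsum a b p (u (φ j)) n) atTop
        (nhds (∑ n ∈ F, nsum a b p v n)) := by
      refine tendsto_finset_sum _ fun n _ => ?_
      simp only [nsum, dlt]
      exact (tendsto_const_nhds.mul ((((hpt (n+1)).sub (hpt n)).abs).pow p)).add
        (tendsto_const_nhds.mul (((hpt n).abs).pow p))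
    refine le_of_tendsto hlim (Eventually.of_forall fun j => ?_)
    exact le_trans (Summable.sum_le_tsum F (fun n _ => hns_nonneg _ n) (hsum (φ j))) (hCp (φ j))
  have hEv : Summable (nsum a b p v) :=
    summable_of_sum_le (fun n => hns_nonneg v n) hnsv_fin
  have hCpv : ∑' n, nsum a b p v n ≤ C ^ p := Summable.tsum_le_of_sum_le hEv hnsv_fin
  -- membership of v in D (log part)
  have hq2 : (2:ℝ) ≤ q := le_trans (by exact_mod_cast hp2) hpq.le
  have hr0 : (0:ℝ) ≤ r := le_trans zero_le_one hr
  have hlogv : Summable (logSummand c q r v) := by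
    set G := r * max 1 ((M + 1) ^ (q + 1)) with hG
    refine Summable.of_abs
      (Summable.of_nonneg_of_le (fun n => abs_nonneg _) (fun n => ?_) (hcsum.mul_right G))
    have h1 : |logSummand c q r v n| = c n * |(|v n| ^ q * Real.log (|v n| ^ r))| := by
      simp only [logSummand]
      rw [mul_assoc, abs_mul, abs_of_nonneg (hc n).le]
    rw [h1, hG, ← mul_assoc]
    calc c n * |(|v n| ^ q * Real.log (|v n| ^ r))|
        ≤ c n * (r * max 1 ((M + 1) ^ (q + 1))) :=
          mul_le_mul_of_nonneg_left (pow_log_bound hq2 hr0 (abs_nonneg _) (hvM n)) (hc n).le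
      _ = c n * r * max 1 ((M + 1) ^ (q + 1)) := by ring
  -- summability of |w|^p
  have hsummp : ∀ (w : ℤ → ℝ), Summable (nsum a b p w) → Summable (fun n => |w n| ^ p) := by
    intro w hw
    refine Summable.of_nonneg_of_le (fun n => pow_nonneg (abs_nonneg _) p)
      (fun n => ?_) (hw.div_const b0)
    rw [le_div_iff₀ hb0]
    calc |w n| ^ p * b0 = b0 * |w n| ^ p := mul_comm _ _
      _ ≤ b n * |w n| ^ p := mul_le_mul_of_nonneg_right (hbb n) (pow_nonneg (abs_nonneg _) p)
      _ ≤ nsum a b p w n := hbpart w n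
  -- difference bounds
  have hd2 : ∀ j n, |u (φ j) n - v n| ^ p ≤ 2 ^ p * (|u (φ j) n| ^ p + |v n| ^ p) := by
    intro j n
    set x := u (φ j) n
    set y := v n
    have h1 : |x - y| ≤ |x| + |y| := tri_abs x y
    have h2 : |x| + |y| ≤ 2 * max |x| |y| := by
      have e1 := le_max_left |x| |y|
      have e2 := le_max_right |x| |y|
      linarith
    have h3 : |x - y| ^ p ≤ (2 * max |x| |y|) ^ p :=
      pow_le_pow_left₀ (abs_nonneg _) (h1.trans h2) p
    rw [mul_pow] at h3
    refine h3.trans (mul_le_mul_of_nonneg_left ?_ (by positivity))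
    rcases max_cases |x| |y| with ⟨h, _⟩ | ⟨h, _⟩ <;> rw [h]
    · exact le_add_of_nonneg_right (pow_nonneg (abs_nonneg _) p)
    · exact le_add_of_nonneg_left (pow_nonneg (abs_nonneg _) p)
  have hdsum_p : ∀ j, Summable (fun n => |u (φ j) n - v n| ^ p) := fun j =>
    Summable.of_nonneg_of_le (fun n => pow_nonneg (abs_nonneg _) p) (hd2 j)
      (((hsummp _ (hsum (φ j))).add (hsummp _ hEv)).mul_left (2 ^ p))
  have hdM : ∀ j n, |u (φ j) n - v n| ≤ 2 * M + 1 := by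
    intro j n
    have h1 := tri_abs (u (φ j) n) (v n)
    have h2 := hUM (φ j) n
    have h3 := hvM n
    linarith
  have hκsum : ∀ (κ : ℝ), (p:ℝ) ≤ κ → ∀ j, Summable (fun n => |u (φ j) n - v n| ^ κ) := by
    intro κ hκ j
    refine Summable.of_nonneg_of_le (fun n => Real.rpow_nonneg (abs_nonneg _) κ)
      (fun n => rpow_le_pow_mul (abs_nonneg _) (hdM j n) hp0 hκ)
      ((hdsum_p j).mul_right _)
  -- finiteness of bad sets
  have hfinB : ∀ B : ℝ, {n : ℤ | b n < B}.Finite := by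
    intro B
    have h1 : ∀ᶠ n in cofinite, B ≤ b n := hbinf.eventually (eventually_ge_atTop B)
    rw [eventually_cofinite] at h1
    convert h1 using 2 with n
    simp [not_le]
  -- tail bound
  have htail : ∀ (B : ℝ), 0 < B → ∀ (F : Finset ℤ), (∀ n : ℤ, n ∉ F → B ≤ b n) →
      ∀ (w : ℤ → ℝ), Summable (nsum a b p w) → (∑' n, nsum a b p w n ≤ C ^ p) →
      ∑' n : (((↑F : Set ℤ)ᶜ : Set ℤ)), |w n.1| ^ p ≤ C ^ p / B := by
    intro B hB F hF w hw hwC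
    have hsub : Summable (fun n : (((↑F : Set ℤ)ᶜ : Set ℤ)) => |w n.1| ^ p) :=
      (hsummp w hw).subtype _
    rw [le_div_iff₀ hB, ← tsum_mul_right]
    have hns_sub : Summable (fun n : (((↑F : Set ℤ)ᶜ : Set ℤ)) => nsum a b p w n.1) := hw.subtype _
    refine le_trans (Summable.tsum_le_tsum (fun n => ?_) (hsub.mul_right B) hns_sub) ?_
    · have hble : B ≤ b n.1 := hF n.1 n.2
      calc |w n.1| ^ p * B = B * |w n.1| ^ p := mul_comm _ _
        _ ≤ b n.1 * |w n.1| ^ p :=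
          mul_le_mul_of_nonneg_right hble (pow_nonneg (abs_nonneg _) p)
        _ ≤ nsum a b p w n.1 := hbpart w n.1
    · have h2 := Summable.sum_add_tsum_compl (s := F) hw
      have h3 : 0 ≤ ∑ n ∈ F, nsum a b p w n := Finset.sum_nonneg fun n _ => hns_nonneg w n
      linarith
  -- main ℓ^κ convergence
  have hmain : ∀ κ : ℝ, (p:ℝ) ≤ κ →
      Tendsto (fun j => ∑' n : ℤ, |u (φ j) n - v n| ^ κ) atTop (nhds 0) := by
    intro κ hκ
    have hκ0 : (0:ℝ) < κ := lt_of_lt_of_le hp0' hκ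
    rw [Metric.tendsto_atTop]
    intro ε hε
    set K := (2 * M + 1) ^ (κ - (p:ℝ)) with hK
    have hK0 : 0 < K := Real.rpow_pos_of_pos (by linarith) _
    set A := K * (2 ^ p * (C ^ p / (1:ℝ) )) with hA0def
    -- choose B with tail ≤ ε/2 : tail ≤ K * 2^p * 2 * C^p / B
    set A' := K * 2 ^ p * (2 * C ^ p) with hA'
    have hA'0 : 0 ≤ A' := by positivity
    set B := 2 * A' / ε + 1 with hB
    have hB0 : 0 < B := by positivity
    have hAB : A' / B < ε / 2 := by
      rw [div_lt_iff₀ hB0]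
      have h1 : ε / 2 * B = A' + ε / 2 := by rw [hB]; field_simp
      linarith
    have hfin := hfinB B
    set F := hfin.toFinset with hFdef
    have hF : ∀ n : ℤ, n ∉ F → B ≤ b n := by
      intro n hn
      by_contra h
      exact hn (hfin.mem_toFinset.2 (not_le.1 h))
    -- tail bound for the differences, uniform in j
    have htailκ : ∀ j, ∑' n : (((↑F : Set ℤ)ᶜ : Set ℤ)), |u (φ j) n.1 - v n.1| ^ κ ≤ A' / B := by
      intro j
      have hsubκ : Summable (fun n : (((↑F : Set ℤ)ᶜ : Set ℤ)) => |u (φ j) n.1 - v n.1| ^ κ) :=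
        (hκsum κ hκ j).subtype _
      have hsubp : Summable (fun n : (((↑F : Set ℤ)ᶜ : Set ℤ)) => |u (φ j) n.1 - v n.1| ^ p) :=
        (hdsum_p j).subtype _
      have step1 : ∑' n : (((↑F : Set ℤ)ᶜ : Set ℤ)), |u (φ j) n.1 - v n.1| ^ κ
          ≤ (∑' n : (((↑F : Set ℤ)ᶜ : Set ℤ)), |u (φ j) n.1 - v n.1| ^ p) * K := by
        rw [← tsum_mul_right]
        exact Summable.tsum_le_tsum
          (fun n => rpow_le_pow_mul (abs_nonneg _) (hdM j n.1) hp0 hκ)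
          hsubκ (hsubp.mul_right K)
      have hsubu : Summable (fun n : (((↑F : Set ℤ)ᶜ : Set ℤ)) => |u (φ j) n.1| ^ p) :=
        (hsummp _ (hsum (φ j))).subtype _
      have hsubv : Summable (fun n : (((↑F : Set ℤ)ᶜ : Set ℤ)) => |v n.1| ^ p) :=
        (hsummp _ hEv).subtype _
      have step2 : ∑' n : (((↑F : Set ℤ)ᶜ : Set ℤ)), |u (φ j) n.1 - v n.1| ^ p
          ≤ 2 ^ p * ((∑' n : (((↑F : Set ℤ)ᶜ : Set ℤ)), |u (φ j) n.1| ^ p)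
              + ∑' n : (((↑F : Set ℤ)ᶜ : Set ℤ)), |v n.1| ^ p) := by
        rw [← Summable.tsum_add hsubu hsubv, ← tsum_mul_left]
        exact Summable.tsum_le_tsum (fun n => hd2 j n.1) hsubp
          (((hsubu.add hsubv)).mul_left (2 ^ p))
      have hu_tail := htail B hB0 F hF (u (φ j)) (hsum (φ j)) (hCp (φ j))
      have hv_tail := htail B hB0 F hF v hEv hCpv
      have hBp : 0 ≤ ∑' n : (((↑F : Set ℤ)ᶜ : Set ℤ)), |u (φ j) n.1 - v n.1| ^ p :=
        tsum_nonneg fun n => pow_nonneg (abs_nonneg _) p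
      calc ∑' n : (((↑F : Set ℤ)ᶜ : Set ℤ)), |u (φ j) n.1 - v n.1| ^ κ
          ≤ (∑' n : (((↑F : Set ℤ)ᶜ : Set ℤ)), |u (φ j) n.1 - v n.1| ^ p) * K := step1
        _ ≤ (2 ^ p * (C ^ p / B + C ^ p / B)) * K := by
            refine mul_le_mul_of_nonneg_right (step2.trans ?_) hK0.le
            refine mul_le_mul_of_nonneg_left ?_ (by positivity)
            exact add_le_add hu_tail hv_tail
        _ = A' / B := by rw [hA']; field_simp; ring
    -- finite part tends to zero
    have hfinlim : Tendsto (fun j => ∑ n ∈ F, |u (φ j) n - v n| ^ κ) atTop (nhds 0) := by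
      have h1 : ∀ n ∈ F, Tendsto (fun j => |u (φ j) n - v n| ^ κ) atTop (nhds 0) := by
        intro n _
        have h2 : Tendsto (fun j => |u (φ j) n - v n|) atTop (nhds 0) := by
          have h3 := (hpt n).sub (tendsto_const_nhds (x := v n))
          rw [sub_self] at h3
          simpa using h3.abs
        have h4 := h2.rpow_const (Or.inr hκ0.le)
        rwa [Real.zero_rpow hκ0.ne'] at h4
      have h5 := tendsto_finset_sum F h1
      simpa using h5
    have hev : ∀ᶠ j in atTop, ∑ n ∈ F, |u (φ j) n - v n| ^ κ < ε / 2 :=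
      hfinlim.eventually_lt_const (by positivity)
    obtain ⟨N, hN⟩ := eventually_atTop.1 hev
    refine ⟨N, fun j hj => ?_⟩
    have hsummκ := hκsum κ hκ j
    have hsplit := Summable.sum_add_tsum_compl (s := F) hsummκ
    have htsnn : 0 ≤ ∑' n : ℤ, |u (φ j) n - v n| ^ κ :=
      tsum_nonneg fun n => Real.rpow_nonneg (abs_nonneg _) κ
    rw [Real.dist_eq, sub_zero, abs_of_nonneg htsnn, ← hsplit]
    have h6 := htailκ j
    have h7 := hN j hj
    linarith
  -- uniform convergence
  have hsup : ∀ ε : ℝ, 0 < ε → ∃ N : ℕ, ∀ j ≥ N, ∀ n : ℤ, |u (φ j) n - v n| ≤ ε := by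
    intro ε hε
    have hε2 : (0:ℝ) < ε / 2 := by positivity
    set B := C ^ p / (ε / 2) ^ p + 1 with hB
    have hB0 : 0 < B := by positivity
    have hCB : C ^ p / B ≤ (ε / 2) ^ p := by
      rw [div_le_iff₀ hB0, hB]
      have hpow : (0:ℝ) < (ε / 2) ^ p := pow_pos hε2 p
      have h1 : (ε / 2) ^ p * (C ^ p / (ε / 2) ^ p + 1) = C ^ p + (ε / 2) ^ p := by
        field_simp
      rw [h1]
      linarith
    have hpt_small : ∀ (w : ℤ → ℝ), (∀ n, b n * |w n| ^ p ≤ C ^ p) →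
        ∀ n, B ≤ b n → |w n| ≤ ε / 2 := by
      intro w hw n hn
      have h1 : |w n| ^ p * B ≤ C ^ p := by
        calc |w n| ^ p * B = B * |w n| ^ p := mul_comm _ _
          _ ≤ b n * |w n| ^ p := mul_le_mul_of_nonneg_right hn (pow_nonneg (abs_nonneg _) p)
          _ ≤ C ^ p := hw n
      have h2 : |w n| ^ p ≤ (ε / 2) ^ p := le_trans ((le_div_iff₀ hB0).2 h1) hCB
      exact le_of_pow_le_pow_left₀ hp0.ne' hε2.le h2
    have hfin := hfinB B
    set F := hfin.toFinset with hFdef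
    have hF : ∀ n : ℤ, n ∉ F → B ≤ b n := by
      intro n hn
      by_contra h
      exact hn (hfin.mem_toFinset.2 (not_le.1 h))
    have hev : ∀ᶠ j in atTop, ∀ n ∈ F, |u (φ j) n - v n| ≤ ε := by
      rw [eventually_all_finset]
      intro n _
      have h2 : Tendsto (fun j => |u (φ j) n - v n|) atTop (nhds 0) := by
        have h3 := (hpt n).sub (tendsto_const_nhds (x := v n))
        rw [sub_self] at h3
        simpa using h3.abs
      exact h2.eventually_le_const hε
    obtain ⟨N, hN⟩ := eventually_atTop.1 hev
    refine ⟨N, fun j hj n => ?_⟩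
    by_cases hn : n ∈ F
    · exact hN j hj n hn
    · have hbn : B ≤ b n := hF n hn
      have h1 := hpt_small (u (φ j)) (hbu (φ j)) n hbn
      have h2 := hpt_small v hbv n hbn
      have h3 := tri_abs (u (φ j) n) (v n)
      linarith
  exact ⟨φ, hφ, v, ⟨hEv, hlogv⟩, hmain, hsup⟩


end DPLap
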